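/- Stores with tensor product, the empty store, and the composite relation (indistinguishability followed by extension) form a partial Kripke resource monoid: the tensor product is associative and has the empty store as two-sided unit, and the preorder ≈⊑ is compatible with tensor product on both sides. -/

import Mathlib

def Negligible (ν : ℕ → ℝ) : Prop :=
  ∀ k : ℕ, ∃ N : ℕ, ∀ n ≥ N, ν n ≤ 1 / (n : ℝ) ^ k

/-- A store: a finite index set together with an ensemble of distributions on
the corresponding function space. -/
structure Store (ι V : Type) where
  dom : Finset ι
  dist : ℕ → PMF (↥dom → V)

/-- Merging of two memories on disjoint union of domains. -/
def mergeFun {ι V : Type} [DecidableEq ι] (Δ Ξ : Finset ι)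
    (a : ↥Δ → V) (b : ↥Ξ → V) : ↥(Δ ∪ Ξ) → V := fun x =>
  if hx : x.1 ∈ Δ then a ⟨x.1, hx⟩
  else b ⟨x.1, (Finset.mem_union.mp x.2).resolve_left hx⟩

/-- Tensor product of stores, defined (only) when the domains are disjoint:
the independent product on the union of the domains. -/
noncomputable def Store.tensor {ι V : Type} [DecidableEq ι] (s r : Store ι V)
    (_ : Disjoint s.dom r.dom) : Store ι V where
  dom := s.dom ∪ r.dom
  dist := fun n => (s.dist n).bind fun a => (r.dist n).map fun b =>
    mergeFun s.dom r.dom a b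

/-- The empty store: empty domain, Dirac distribution on the empty memory. -/
noncomputable def Store.empty (ι V : Type) : Store ι V where
  dom := ∅
  dist := fun _ => PMF.pure fun x => absurd x.2 (Finset.notMem_empty x.1)

/-- `s ⊑ r`: `s` is the projection of `r` onto `dom s`. -/
def StoreExt {ι V : Type} (s r : Store ι V) : Prop :=
  ∃ h : s.dom ⊆ r.dom,
    ∀ n, (r.dist n).map (fun m (x : ↥s.dom) => m ⟨x.1, h x.2⟩) = s.dist n

/-- Indistinguishability of stores on the same domain. -/
def StoreIndist {ι V : Type} (𝔄 : ∀ Δ : Finset ι, Set (ℕ → (↥Δ → V) → PMF Bool))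
    (s r : Store ι V) : Prop :=
  ∃ h : s.dom = r.dom, ∀ A ∈ 𝔄 s.dom,
    Negligible fun n =>
      |(((s.dist n).bind (A n)) true).toReal -
        ((((r.dist n).map fun m (x : ↥s.dom) => m ⟨x.1, h ▸ x.2⟩).bind (A n)) true).toReal|

/-- The composite relation: indistinguishability followed by extension. -/
def IndExt {ι V : Type} (𝔄 : ∀ Δ : Finset ι, Set (ℕ → (↥Δ → V) → PMF Bool))
    (s r : Store ι V) : Prop :=
  ∃ u : Store ι V, StoreIndist 𝔄 s u ∧ StoreExt u r

section PKRMhelpers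
lemma store_eq {ι V : Type} {D E : Finset ι} (h : D = E) {f : ℕ → PMF (↥D → V)}
    {g : ℕ → PMF (↥E → V)}
    (hfg : ∀ n, (f n).map (fun m (x : ↥E) => m ⟨x.1, h ▸ x.2⟩) = g n) :
    Store.mk D f = Store.mk E g := by
  subst h
  congr 1
  funext n
  rw [← hfg n]
  exact (PMF.map_id _).symm

variable {ι V : Type} [DecidableEq ι]

lemma pmf_bind_pure_eq {α : Type*} (p : PMF α) (g : α → α) (hg : ∀ a, g a = a) :
    (p.bind fun a => PMF.pure (g a)) = p := by
  have : (fun a => PMF.pure (g a)) = PMF.pure := by funext a; rw [hg]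
  rw [this, PMF.bind_pure]

lemma tensor_empty_left (s : Store ι V) (h : Disjoint (Store.empty ι V).dom s.dom) :
    (Store.empty ι V).tensor s h = s := by
  obtain ⟨D, f⟩ := s
  refine store_eq (Finset.empty_union D) fun n => ?_
  show (((PMF.pure _).bind fun a => (f n).map fun b => mergeFun ∅ D a b).map _) = f n
  rw [PMF.pure_bind, PMF.map_comp]
  convert PMF.map_id (f n) using 2
  funext b x
  simp only [Function.comp_apply, id, mergeFun, dif_neg (Finset.notMem_empty _)]

lemma tensor_empty_right (s : Store ι V) (h : Disjoint s.dom (Store.empty ι V).dom) :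
    s.tensor (Store.empty ι V) h = s := by
  obtain ⟨D, f⟩ := s
  refine store_eq (Finset.union_empty D) fun n => ?_
  show (((f n).bind fun a => (PMF.pure _).map fun b => mergeFun D ∅ a b).map _) = f n
  simp only [PMF.pure_map, PMF.map_bind]
  refine pmf_bind_pure_eq (f n) _ fun a => ?_
  funext x
  show mergeFun D ∅ a _ ⟨x.1, _⟩ = a x
  rw [mergeFun, dif_pos x.2]

lemma tensor_assoc (s r t : Store ι V) (h1 : Disjoint s.dom r.dom)
    (h2 : Disjoint s.dom t.dom) (h3 : Disjoint r.dom t.dom) :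
    (s.tensor r h1).tensor t (Finset.disjoint_union_left.mpr ⟨h2, h3⟩)
      = s.tensor (r.tensor t h3) (Finset.disjoint_union_right.mpr ⟨h1, h2⟩) := by
  obtain ⟨D, f⟩ := s; obtain ⟨E, g⟩ := r; obtain ⟨F, k⟩ := t
  have hDF : Disjoint D F := h2
  have hEF : Disjoint E F := h3
  refine store_eq (Finset.union_assoc D E F) fun n => ?_
  show ((((f n).bind fun a => (g n).map fun b => mergeFun D E a b).bind
      fun ab => (k n).map fun c => mergeFun (D ∪ E) F ab c).map _)
    = (f n).bind fun a => ((g n).bind fun b => (k n).map fun c => mergeFun E F b c).map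
      fun bc => mergeFun D (E ∪ F) a bc
  simp only [PMF.bind_bind, PMF.bind_map, PMF.map_bind, PMF.map_comp, Function.comp_def]
  refine congrArg _ (funext fun a => congrArg _ (funext fun b => ?_))
  refine congrArg (fun φ => PMF.map φ (k n)) (funext fun c => funext fun x => ?_)
  simp only [mergeFun]
  by_cases hx1 : x.1 ∈ D
  · rw [dif_pos hx1, dif_pos (Finset.mem_union_left E hx1), dif_pos hx1]
  · rw [dif_neg hx1]
    by_cases hx2 : x.1 ∈ E
    · rw [dif_pos (Finset.mem_union_right D hx2), dif_neg hx1, dif_pos hx2]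
    · rw [dif_neg hx2, dif_neg (by simp [Finset.mem_union, hx1, hx2])]

section helpers
variable {ι V : Type} [DecidableEq ι]
  {𝔄 : ∀ Δ : Finset ι, Set (ℕ → (↥Δ → V) → PMF Bool)}

lemma negligible_of_le {f g : ℕ → ℝ} (h : ∀ n, f n ≤ g n) (hg : Negligible g) :
    Negligible f := fun k => by
  obtain ⟨N, hN⟩ := hg k
  exact ⟨N, fun n hn => (h n).trans (hN n hn)⟩

lemma negligible_zero : Negligible (fun _ => (0:ℝ)) := fun k =>
  ⟨0, fun n _ => one_div_nonneg.mpr (pow_nonneg (Nat.cast_nonneg n) k)⟩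

lemma negligible_add {f g : ℕ → ℝ} (hf : Negligible f) (hg : Negligible g) :
    Negligible (fun n => f n + g n) := by
  intro k
  obtain ⟨N₁, h₁⟩ := hf (k + 1)
  obtain ⟨N₂, h₂⟩ := hg (k + 1)
  refine ⟨max (max N₁ N₂) 2, fun n hn => ?_⟩
  have hn1 : n ≥ N₁ := le_trans (le_max_left _ _) ((le_max_left _ _).trans hn)
  have hn2 : n ≥ N₂ := le_trans (le_max_right _ _) ((le_max_left _ _).trans hn)
  have hn3 : (2:ℝ) ≤ n := by exact_mod_cast (le_max_right _ _).trans hn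
  have hnp : (0:ℝ) < n := by linarith
  have hpk : (0:ℝ) < (n:ℝ) ^ k := pow_pos hnp k
  have : f n + g n ≤ 2 / (n:ℝ) ^ (k+1) := by
    have := h₁ n hn1; have := h₂ n hn2; rw [div_eq_mul_inv] at *; linarith
  refine this.trans ?_
  rw [div_le_div_iff₀ (by positivity) hpk, pow_succ]
  nlinarith

lemma storeIndist_iff {D : Finset ι} (f g : ℕ → PMF (↥D → V)) :
    StoreIndist 𝔄 ⟨D, f⟩ ⟨D, g⟩ ↔ ∀ A ∈ 𝔄 D, Negligible fun n =>
      |(((f n).bind (A n)) true).toReal - (((g n).bind (A n)) true).toReal| := by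
  constructor
  · rintro ⟨h, H⟩ A hA
    refine negligible_of_le (fun n => le_of_eq
      (congrArg (fun p : PMF (↥D → V) =>
        |(((f n).bind (A n)) true).toReal - ((p.bind (A n)) true).toReal|)
        (PMF.map_id (g n)).symm)) (H A hA)
  · intro H
    refine ⟨rfl, fun A hA => negligible_of_le (fun n => le_of_eq
      (congrArg (fun p : PMF (↥D → V) =>
        |(((f n).bind (A n)) true).toReal - ((p.bind (A n)) true).toReal|)
        (PMF.map_id (g n)))) (H A hA)⟩

lemma storeIndist_refl (s : Store ι V) : StoreIndist 𝔄 s s := by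
  obtain ⟨D, f⟩ := s
  rw [storeIndist_iff]
  intro A hA
  exact negligible_of_le (fun n => by simp) negligible_zero

lemma storeIndist_trans {s u w : Store ι V} (h1 : StoreIndist 𝔄 s u)
    (h2 : StoreIndist 𝔄 u w) : StoreIndist 𝔄 s w := by
  obtain ⟨D, f⟩ := s; obtain ⟨E, g⟩ := u; obtain ⟨F, k⟩ := w
  obtain ⟨hd, -⟩ := id h1
  obtain ⟨hd', -⟩ := id h2
  have hd2 : D = E := hd
  subst hd2
  have hd3 : D = F := hd'
  subst hd3
  rw [storeIndist_iff] at h1 h2 ⊢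
  intro A hA
  exact negligible_of_le (fun n => abs_sub_le _ _ _)
    (negligible_add (h1 A hA) (h2 A hA))

lemma storeExt_refl (s : Store ι V) : StoreExt s s :=
  ⟨subset_rfl, fun n => PMF.map_id _⟩

lemma storeExt_trans {s u w : Store ι V} (h1 : StoreExt s u) (h2 : StoreExt u w) :
    StoreExt s w := by
  obtain ⟨hsub, hp⟩ := h1
  obtain ⟨hsub', hp'⟩ := h2
  refine ⟨hsub.trans hsub', fun n => ?_⟩
  rw [← hp n, ← hp' n, PMF.map_comp]
  rfl

lemma ext_indist_swap
    (hrestr : ∀ (Δ Ξ : Finset ι) (h : Δ ⊆ Ξ), ∀ A ∈ 𝔄 Δ,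
      (fun n (m : ↥Ξ → V) => A n fun x => m ⟨x.1, h x.2⟩) ∈ 𝔄 Ξ)
    {u r v : Store ι V} (h1 : StoreExt u r) (h2 : StoreIndist 𝔄 r v) :
    ∃ w, StoreIndist 𝔄 u w ∧ StoreExt w v := by
  obtain ⟨C, fu⟩ := u; obtain ⟨E, g⟩ := r; obtain ⟨E', g'⟩ := v
  obtain ⟨hd, -⟩ := id h2
  have hd2 : E = E' := hd
  subst hd2
  rw [storeIndist_iff] at h2
  obtain ⟨hsub, hproj⟩ := h1
  dsimp only at hproj
  have hsub' : C ⊆ E := hsub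
  refine ⟨⟨C, fun n => (g' n).map fun m (x : ↥C) => m ⟨x.1, hsub' x.2⟩⟩, ?_,
    ⟨hsub', fun n => rfl⟩⟩
  rw [storeIndist_iff]
  intro A hA
  have := h2 _ (hrestr C E hsub' A hA)
  refine negligible_of_le (fun n => le_of_eq ?_) this
  have e1 : ((fu n).bind (A n)) =
      (g n).bind ((fun n (m : ↥E → V) => A n fun x => m ⟨x.1, hsub' x.2⟩) n) := by
    rw [← hproj n]
    exact PMF.bind_map _ _ _
  have e2 : (((g' n).map fun m (x : ↥C) => m ⟨x.1, hsub' x.2⟩).bind (A n)) =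
      (g' n).bind ((fun n (m : ↥E → V) => A n fun x => m ⟨x.1, hsub' x.2⟩) n) :=
    PMF.bind_map _ _ _
  rw [e1, e2]

lemma storeExt_tensor_right {u r : Store ι V} (t : Store ι V)
    (hu : Disjoint u.dom t.dom) (hr : Disjoint r.dom t.dom) (h : StoreExt u r) :
    StoreExt (u.tensor t hu) (r.tensor t hr) := by
  obtain ⟨C, fu⟩ := u; obtain ⟨E, g⟩ := r
  obtain ⟨hsub, hproj⟩ := h
  have hsub' : C ⊆ E := hsub
  dsimp only at hproj
  refine ⟨Finset.union_subset_union hsub' subset_rfl, fun n => ?_⟩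
  show (((g n).bind fun a => (t.dist n).map fun b => mergeFun E t.dom a b).map
      fun m (x : ↥(C ∪ t.dom)) => m ⟨x.1, Finset.union_subset_union hsub' subset_rfl x.2⟩)
    = (fu n).bind fun a => (t.dist n).map fun b => mergeFun C t.dom a b
  rw [← hproj n, PMF.bind_map, PMF.map_bind]
  refine congrArg _ (funext fun a => ?_)
  rw [PMF.map_comp]
  refine congrArg (fun φ => PMF.map φ (t.dist n)) (funext fun b => funext fun x => ?_)
  simp only [Function.comp_apply, mergeFun]
  by_cases hx : x.1 ∈ C
  · rw [dif_pos hx, dif_pos (hsub' hx)]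
  · rw [dif_neg hx]
    have hxt : x.1 ∈ t.dom := (Finset.mem_union.mp x.2).resolve_left hx
    rw [dif_neg (Finset.disjoint_right.mp hr hxt)]

lemma storeExt_tensor_left {u r : Store ι V} (t : Store ι V)
    (hu : Disjoint t.dom u.dom) (hr : Disjoint t.dom r.dom) (h : StoreExt u r) :
    StoreExt (t.tensor u hu) (t.tensor r hr) := by
  obtain ⟨C, fu⟩ := u; obtain ⟨E, g⟩ := r
  obtain ⟨hsub, hproj⟩ := h
  have hsub' : C ⊆ E := hsub
  dsimp only at hproj
  refine ⟨Finset.union_subset_union subset_rfl hsub', fun n => ?_⟩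
  show (((t.dist n).bind fun a => (g n).map fun b => mergeFun t.dom E a b).map
      fun m (x : ↥(t.dom ∪ C)) => m ⟨x.1, Finset.union_subset_union subset_rfl hsub' x.2⟩)
    = (t.dist n).bind fun a => (fu n).map fun b => mergeFun t.dom C a b
  rw [PMF.map_bind]
  refine congrArg _ (funext fun a => ?_)
  rw [← hproj n, PMF.map_comp, PMF.map_comp]
  refine congrArg (fun φ => PMF.map φ (g n)) (funext fun b => funext fun x => ?_)
  simp only [Function.comp_apply, mergeFun]

lemma storeIndist_tensor_right
    (hsampR : ∀ (Δ : Finset ι) (t : Store ι V), ∀ A ∈ 𝔄 (Δ ∪ t.dom),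
      (fun n (a : ↥Δ → V) => (t.dist n).bind fun b => A n (mergeFun Δ t.dom a b)) ∈ 𝔄 Δ)
    {s u : Store ι V} (t : Store ι V) (hs : Disjoint s.dom t.dom)
    (hu : Disjoint u.dom t.dom) (h : StoreIndist 𝔄 s u) :
    StoreIndist 𝔄 (s.tensor t hs) (u.tensor t hu) := by
  obtain ⟨D, f⟩ := s; obtain ⟨E, g⟩ := u
  obtain ⟨hd, -⟩ := id h
  have hd2 : D = E := hd
  subst hd2
  rw [storeIndist_iff] at h
  show StoreIndist 𝔄
    ⟨D ∪ t.dom, fun n => (f n).bind fun a => (t.dist n).map fun b => mergeFun D t.dom a b⟩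
    ⟨D ∪ t.dom, fun n => (g n).bind fun a => (t.dist n).map fun b => mergeFun D t.dom a b⟩
  rw [storeIndist_iff]
  intro A hA
  have := h _ (hsampR D t A hA)
  refine negligible_of_le (fun n => le_of_eq ?_) this
  have key : ∀ p : PMF (↥D → V),
      ((p.bind fun a => (t.dist n).map fun b => mergeFun D t.dom a b).bind (A n))
        = p.bind ((fun n (a : ↥D → V) =>
            (t.dist n).bind fun b => A n (mergeFun D t.dom a b)) n) := by
    intro p
    rw [PMF.bind_bind]
    exact congrArg _ (funext fun a => PMF.bind_map _ _ _)
  rw [key (f n), key (g n)]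

lemma storeIndist_tensor_left
    (hsampL : ∀ (Ξ : Finset ι) (t : Store ι V), ∀ A ∈ 𝔄 (t.dom ∪ Ξ),
      (fun n (b : ↥Ξ → V) => (t.dist n).bind fun a => A n (mergeFun t.dom Ξ a b)) ∈ 𝔄 Ξ)
    {s u : Store ι V} (t : Store ι V) (hs : Disjoint t.dom s.dom)
    (hu : Disjoint t.dom u.dom) (h : StoreIndist 𝔄 s u) :
    StoreIndist 𝔄 (t.tensor s hs) (t.tensor u hu) := by
  obtain ⟨D, f⟩ := s; obtain ⟨E, g⟩ := u
  obtain ⟨hd, -⟩ := id h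
  have hd2 : D = E := hd
  subst hd2
  rw [storeIndist_iff] at h
  show StoreIndist 𝔄
    ⟨t.dom ∪ D, fun n => (t.dist n).bind fun a => (f n).map fun b => mergeFun t.dom D a b⟩
    ⟨t.dom ∪ D, fun n => (t.dist n).bind fun a => (g n).map fun b => mergeFun t.dom D a b⟩
  rw [storeIndist_iff]
  intro A hA
  have := h _ (hsampL D t A hA)
  refine negligible_of_le (fun n => le_of_eq ?_) this
  have key : ∀ p : PMF (↥D → V),
      (((t.dist n).bind fun a => p.map fun b => mergeFun t.dom D a b).bind (A n))
        = p.bind ((fun n (b : ↥D → V) =>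
            (t.dist n).bind fun a => A n (mergeFun t.dom D a b)) n) := by
    intro p
    rw [PMF.bind_bind]
    simp only [PMF.bind_map]
    rw [PMF.bind_comm (t.dist n) p fun a => (A n) ∘ fun b => mergeFun t.dom D a b]
    rfl
  rw [key (f n), key (g n)]
end helpers
end PKRMhelpers

/-- Stores with tensor product, the empty store, and the relation `≈⊑` form a
partial Kripke resource monoid: the tensor product is associative with the
empty store as two-sided unit, `≈⊑` is a preorder, and it is compatible with
tensor product on both sides.  The distinguisher class is assumed closed under
precomposition with restriction and with sampling of an independent component. -/
theorem store_partial_kripke_resource_monoid {ι V : Type} [DecidableEq ι]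
    (𝔄 : ∀ Δ : Finset ι, Set (ℕ → (↥Δ → V) → PMF Bool))
    (hrestr : ∀ (Δ Ξ : Finset ι) (h : Δ ⊆ Ξ), ∀ A ∈ 𝔄 Δ,
      (fun n (m : ↥Ξ → V) => A n fun x => m ⟨x.1, h x.2⟩) ∈ 𝔄 Ξ)
    (hsampR : ∀ (Δ : Finset ι) (t : Store ι V), ∀ A ∈ 𝔄 (Δ ∪ t.dom),
      (fun n (a : ↥Δ → V) => (t.dist n).bind fun b => A n (mergeFun Δ t.dom a b)) ∈ 𝔄 Δ)
    (hsampL : ∀ (Ξ : Finset ι) (t : Store ι V), ∀ A ∈ 𝔄 (t.dom ∪ Ξ),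
      (fun n (b : ↥Ξ → V) => (t.dist n).bind fun a => A n (mergeFun t.dom Ξ a b)) ∈ 𝔄 Ξ) :
    (∀ (s : Store ι V) (h : Disjoint (Store.empty ι V).dom s.dom),
        (Store.empty ι V).tensor s h = s) ∧
    (∀ (s : Store ι V) (h : Disjoint s.dom (Store.empty ι V).dom),
        s.tensor (Store.empty ι V) h = s) ∧
    (∀ (s r t : Store ι V) (h1 : Disjoint s.dom r.dom) (h2 : Disjoint s.dom t.dom)
        (h3 : Disjoint r.dom t.dom),
        (s.tensor r h1).tensor t
            (show Disjoint (s.dom ∪ r.dom) t.dom from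
              Finset.disjoint_union_left.mpr ⟨h2, h3⟩)
          = s.tensor (r.tensor t h3)
            (show Disjoint s.dom (r.dom ∪ t.dom) from
              Finset.disjoint_union_right.mpr ⟨h1, h2⟩)) ∧
    (∀ s : Store ι V, IndExt 𝔄 s s) ∧
    (∀ s r t : Store ι V, IndExt 𝔄 s r → IndExt 𝔄 r t → IndExt 𝔄 s t) ∧
    (∀ (s r t : Store ι V) (h1 : Disjoint s.dom t.dom) (h2 : Disjoint r.dom t.dom),
        IndExt 𝔄 s r → IndExt 𝔄 (s.tensor t h1) (r.tensor t h2)) ∧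
    (∀ (s r t : Store ι V) (h1 : Disjoint t.dom s.dom) (h2 : Disjoint t.dom r.dom),
        IndExt 𝔄 s r → IndExt 𝔄 (t.tensor s h1) (t.tensor r h2)) := by
  refine ⟨tensor_empty_left, tensor_empty_right, tensor_assoc,
    fun s => ⟨s, storeIndist_refl s, storeExt_refl s⟩, ?_, ?_, ?_⟩
  · rintro s r t ⟨u, hsu, hur⟩ ⟨v, hrv, hvt⟩
    obtain ⟨w, huw, hwv⟩ := ext_indist_swap hrestr hur hrv
    exact ⟨w, storeIndist_trans hsu huw, storeExt_trans hwv hvt⟩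
  · rintro s r t h1 h2 ⟨u, hsu, hur⟩
    obtain ⟨hd, -⟩ := id hsu
    have hu : Disjoint u.dom t.dom := hd ▸ h1
    exact ⟨u.tensor t hu, storeIndist_tensor_right hsampR t h1 hu hsu,
      storeExt_tensor_right t hu h2 hur⟩
  · rintro s r t h1 h2 ⟨u, hsu, hur⟩
    obtain ⟨hd, -⟩ := id hsu
    have hu : Disjoint t.dom u.dom := hd ▸ h1
    exact ⟨t.tensor u hu, storeIndist_tensor_left hsampL t h1 hu hsu,
      storeExt_tensor_left t hu h2 hur⟩
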